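/- arXiv:2408.00704 — 2 statements merged into one kernel-verified Lean document; each statement's English description precedes it below -/
import Mathlib

section
/- Let γ^μ_{αβ} be symmetric bilinear maps S₊ × S₊ → V satisfying the Fierz identity 2 γ^μ_{α(β} γ_{μ|γ)δ} = − γ^μ_{βγ} γ_{μαδ}. If Q ∈ S₊ satisfies γ^μ_{αβ} Q^α Q^β = 0, then for all α, δ one has Q^β Q^γ γ^μ_{αβ} γ_{μγδ} = 0. -/
open scoped BigOperators

/-- If the symmetric chiral gamma matrices satisfy the ten-dimensional
Fierz identity `2 γ^μ_{α(β} γ_{μ|γ)δ} = − γ^μ_{βγ} γ_{μαδ}` and `Q ∈ S₊` satisfies the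
pure-spinor condition `γ^μ_{αβ} Q^α Q^β = 0`, then for all `α, δ` one has
`Q^β Q^γ γ^μ_{αβ} γ_{μγδ} = 0`. -/
theorem fierz_pure_spinor_contraction
    (γ : Fin 10 → Fin 16 → Fin 16 → ℂ)
    (hsym : ∀ μ α β, γ μ α β = γ μ β α)
    (hfierz : ∀ α β β' δ : Fin 16,
      ∑ μ, (γ μ α β * γ μ β' δ + γ μ α β' * γ μ β δ) = - ∑ μ, γ μ β β' * γ μ α δ)
    (Q : Fin 16 → ℂ)
    (hQ : ∀ μ, ∑ α, ∑ β, γ μ α β * Q α * Q β = 0) :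
    ∀ α δ : Fin 16, ∑ β, ∑ β', ∑ μ, Q β * Q β' * γ μ α β * γ μ β' δ = 0 := by
  intro α δ
  set T : ℂ := ∑ β, ∑ β', ∑ μ, Q β * Q β' * γ μ α β * γ μ β' δ with hT
  -- contract the Fierz identity with Q β * Q β'
  have h1 : ∑ β, ∑ β', Q β * Q β' *
      (∑ μ, (γ μ α β * γ μ β' δ + γ μ α β' * γ μ β δ)) =
      ∑ β, ∑ β', Q β * Q β' * (- ∑ μ, γ μ β β' * γ μ α δ) := by
    refine Finset.sum_congr rfl fun β _ => Finset.sum_congr rfl fun β' _ => ?_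
    rw [hfierz]
  -- LHS equals 2 * T
  have hL : ∑ β, ∑ β', Q β * Q β' *
      (∑ μ, (γ μ α β * γ μ β' δ + γ μ α β' * γ μ β δ)) = 2 * T := by
    have swap : ∑ β, ∑ β', ∑ μ, Q β * Q β' * γ μ α β' * γ μ β δ = T := by
      rw [Finset.sum_comm]
      refine Finset.sum_congr rfl fun β' _ => Finset.sum_congr rfl fun β _ => ?_
      refine Finset.sum_congr rfl fun μ _ => by ring
    calc ∑ β, ∑ β', Q β * Q β' *
        (∑ μ, (γ μ α β * γ μ β' δ + γ μ α β' * γ μ β δ))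
        = (∑ β, ∑ β', ∑ μ, Q β * Q β' * γ μ α β * γ μ β' δ)
          + ∑ β, ∑ β', ∑ μ, Q β * Q β' * γ μ α β' * γ μ β δ := by
          rw [← Finset.sum_add_distrib]
          refine Finset.sum_congr rfl fun β _ => ?_
          rw [← Finset.sum_add_distrib]
          refine Finset.sum_congr rfl fun β' _ => ?_
          rw [Finset.mul_sum, ← Finset.sum_add_distrib]
          refine Finset.sum_congr rfl fun μ _ => by ring
      _ = 2 * T := by rw [swap, hT]; ring
  -- RHS equals 0 by the pure spinor condition
  have key : ∀ μ, ∑ β, ∑ β', -(Q β * Q β' * (γ μ β β' * γ μ α δ)) = 0 := by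
    intro μ
    have h0 : ∑ β, ∑ β', -(Q β * Q β' * (γ μ β β' * γ μ α δ))
        = -((∑ β, ∑ β', γ μ β β' * Q β * Q β') * γ μ α δ) := by
      rw [Finset.sum_mul, ← Finset.sum_neg_distrib]
      refine Finset.sum_congr rfl fun β _ => ?_
      rw [Finset.sum_mul, ← Finset.sum_neg_distrib]
      exact Finset.sum_congr rfl fun β' _ => by ring
    rw [h0, hQ, zero_mul, neg_zero]
  have hR : ∑ β, ∑ β', Q β * Q β' * (- ∑ μ, γ μ β β' * γ μ α δ) = 0 := by
    calc ∑ β, ∑ β', Q β * Q β' * (- ∑ μ, γ μ β β' * γ μ α δ)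
        = ∑ β, ∑ β', ∑ μ, -(Q β * Q β' * (γ μ β β' * γ μ α δ)) := by
          refine Finset.sum_congr rfl fun β _ => Finset.sum_congr rfl fun β' _ => ?_
          rw [mul_neg, Finset.mul_sum, ← Finset.sum_neg_distrib]
      _ = ∑ β, ∑ μ, ∑ β', -(Q β * Q β' * (γ μ β β' * γ μ α δ)) :=
          Finset.sum_congr rfl fun β _ => Finset.sum_comm
      _ = ∑ μ, ∑ β, ∑ β', -(Q β * Q β' * (γ μ β β' * γ μ α δ)) := Finset.sum_comm
      _ = 0 := Finset.sum_eq_zero fun μ _ => key μ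
  have := h1
  rw [hL, hR] at this
  have h2 : (2 : ℂ) ≠ 0 := two_ne_zero
  exact (mul_eq_zero.mp this).resolve_left h2
end

section
/- Let 𝔤 be the L∞-algebra on 𝔰𝔩(5,ℂ) ⊕ Λ²ℂ⁵ ⊕ (ℂ⁵)*[−2] with the brackets of the extended holomorphic symmetry algebra (nontrivial μ₂ and the nonzero 𝔰𝔩(5)-equivariant μ₄ : L* ⊗ (Λ²L)^{∧3} → 𝔰𝔩(5)), and let 𝔥 be any strict graded Lie algebra structure on the same graded vector space. Then there is no L∞-isomorphism φ : 𝔤 ⇝ 𝔥. -/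
open scoped BigOperators

/-- The Koszul sign `χ(σ, x)` of a permutation `σ` acting on homogeneous elements of
degrees `d`, in the skew-symmetric convention. -/
def koszulSign {n : ℕ} (d : Fin n → ℤ) (σ : Equiv.Perm (Fin n)) : ℤ :=
  (Equiv.Perm.sign σ : ℤ) *
    ∏ p ∈ Finset.univ.filter (fun p : Fin n × Fin n => p.1 < p.2 ∧ σ p.2 < σ p.1),
      (-1 : ℤ) ^ (d (σ p.1) * d (σ p.2)).natAbs

/-- `σ` is an `(i, n−i)`-shuffle. -/
def IsShuffle {n : ℕ} (i : ℕ) (σ : Equiv.Perm (Fin n)) : Prop :=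
  (∀ a b : Fin n, a < b → b.val < i → σ a < σ b) ∧
  (∀ a b : Fin n, a < b → i ≤ a.val → σ a < σ b)

instance {n i : ℕ} : DecidablePred (IsShuffle (n := n) i) := fun σ => by
  unfold IsShuffle; infer_instance

/-- The homotopy Jacobi identities. -/
def HomotopyJacobi {W : Type} [AddCommGroup W] [Module ℂ W]
    (μ : (k : ℕ) → (Fin k → W) → W) (n : ℕ) (d : Fin n → ℤ) (x : Fin n → W) : Prop :=
  ∑ i : Fin n, ∑ σ ∈ Finset.univ.filter (IsShuffle (i.val + 1)),
    ((-1 : ℤ) ^ (n - (i.val + 1)) * koszulSign d σ) •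
      μ (n - (i.val + 1) + 1)
        (Fin.cons
          (μ (i.val + 1) (fun t : Fin (i.val + 1) => x (σ (Fin.castLE i.isLt t))))
          (fun t : Fin (n - (i.val + 1)) =>
            x (σ ⟨i.val + 1 + t.val, by have h1 := i.isLt; have h2 := t.isLt; omega⟩)))
    = 0

/-- Lexicographic order on a sigma type of blocks. -/
def SigmaLexLt {j : ℕ} {k : Fin j → ℕ} (p q : (t : Fin j) × Fin (k t)) : Prop :=
  p.1 < q.1 ∨ (p.1 = q.1 ∧ p.2.val < q.2.val)

instance {j : ℕ} {k : Fin j → ℕ} (p q : (t : Fin j) × Fin (k t)) :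
    Decidable (SigmaLexLt p q) := by unfold SigmaLexLt; infer_instance

/-- `e` enumerates the arguments blockwise monotonically (i.e. it is the data of a
`(k₁,…,k_j)`-shuffle). -/
def IsBlockShuffle {i j : ℕ} {k : Fin j → ℕ} (e : ((t : Fin j) × Fin (k t)) ≃ Fin i) :
    Prop :=
  ∀ (t : Fin j) (s s' : Fin (k t)), s < s' → e ⟨t, s⟩ < e ⟨t, s'⟩

instance {i j : ℕ} {k : Fin j → ℕ} : DecidablePred (IsBlockShuffle (i := i) (j := j) (k := k)) :=
  fun e => by unfold IsBlockShuffle; infer_instance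

/-- The Koszul sign `χ(σ, x)` of the block shuffle `e` on degrees `d`. -/
def chiSign {i j : ℕ} {k : Fin j → ℕ} (d : Fin i → ℤ)
    (e : ((t : Fin j) × Fin (k t)) ≃ Fin i) : ℤ :=
  ∏ p ∈ Finset.univ.filter
      (fun p : ((t : Fin j) × Fin (k t)) × ((t : Fin j) × Fin (k t)) =>
        SigmaLexLt p.1 p.2 ∧ e p.2 < e p.1),
    (-(-1 : ℤ) ^ (d (e p.1) * d (e p.2)).natAbs)

/-- The extra sign factor in `ζ(σ, k, x)`:
`(−1)^{∑_{m<n} k_m k_n + ∑_m k_m (j−m) + ∑_{m} (1−k_m) ∑_{arguments before block m} |x|}`. -/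
def zetaExtra {i j : ℕ} (k : Fin j → ℕ) (d : Fin i → ℤ)
    (e : ((t : Fin j) × Fin (k t)) ≃ Fin i) : ℤ :=
  (-1 : ℤ) ^
    ((∑ p ∈ Finset.univ.filter (fun p : Fin j × Fin j => p.1 < p.2),
        ((k p.1 : ℤ) * (k p.2 : ℤ)))
      + (∑ m : Fin j, (k m : ℤ) * ((j : ℤ) - 1 - (m.val : ℤ)))
      + (∑ m : Fin j, (1 - (k m : ℤ)) *
          ∑ p ∈ Finset.univ.filter (fun p : (t : Fin j) × Fin (k t) => p.1 < m),
            d (e p))).natAbs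

/-- The `i`-ary coherence relation for an `L∞`-morphism `φ : (𝔤, μg) ⇝ (𝔥, μh)`,
evaluated on homogeneous elements `x` of degrees `d`:
`∑_j (1/j!) ∑ ζ(σ,k,x) μ_j^𝔥(φ^{(k₁)}(…),…,φ^{(k_j)}(…))
  = ∑_{j+k=i} (−1)^k χ(σ,x) φ^{(k+1)}(μ_j^𝔤(…), …)`. -/
def MorphCoherence {W₁ W₂ : Type}
    [AddCommGroup W₁] [Module ℂ W₁] [AddCommGroup W₂] [Module ℂ W₂]
    (μg : (k : ℕ) → (Fin k → W₁) → W₁) (μh : (k : ℕ) → (Fin k → W₂) → W₂)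
    (φ : (n : ℕ) → (Fin n → W₁) → W₂)
    (i : ℕ) (d : Fin i → ℤ) (x : Fin i → W₁) : Prop :=
  (∑ j ∈ Finset.Icc 1 i,
    ∑ c ∈ Finset.univ.filter (fun c : Fin j → Fin i => ∑ t, ((c t).val + 1) = i),
      ∑ e ∈ Finset.univ.filter
          (fun e : ((t : Fin j) × Fin ((c t).val + 1)) ≃ Fin i => IsBlockShuffle e),
        (((Nat.factorial j : ℂ))⁻¹ *
            (((chiSign d e * zetaExtra (fun t => (c t).val + 1) d e) : ℤ) : ℂ)) •
          μh j (fun t => φ ((c t).val + 1) (fun s => x (e ⟨t, s⟩))))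
  =
  ∑ jj : Fin i, ∑ σ ∈ Finset.univ.filter (IsShuffle (jj.val + 1)),
    ((((-1 : ℤ) ^ (i - (jj.val + 1)) * koszulSign d σ) : ℤ) : ℂ) •
      φ (i - (jj.val + 1) + 1)
        (Fin.cons (μg (jj.val + 1) (fun t => x (σ (Fin.castLE jj.isLt t))))
          (fun t : Fin (i - (jj.val + 1)) =>
            x (σ ⟨jj.val + 1 + t.val, by have h1 := jj.isLt; have h2 := t.isLt; omega⟩)))
/-! ## The extended holomorphic symmetry algebra `𝔰𝔩(5) ⊕ Λ²L ⊕ L*[−2]` -/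

/-- The underlying space: `𝔤𝔩(5)`-part (containing `𝔰𝔩(5)`), `Λ²L`-part (antisymmetric
matrices `r^{ij}`), and `L*`-part (covectors `e_i`, placed in degree 2). -/
abbrev W6 : Type :=
  Matrix (Fin 5) (Fin 5) ℂ × Matrix (Fin 5) (Fin 5) ℂ × (Fin 5 → ℂ)

/-- Traceless matrices `𝔰𝔩(5) ⊆ 𝔤𝔩(5)`. -/
noncomputable def sl5sub : Submodule ℂ (Matrix (Fin 5) (Fin 5) ℂ) :=
  LinearMap.ker (Matrix.traceLinearMap (Fin 5) ℂ ℂ)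

/-- Antisymmetric matrices, modelling `Λ²L`. -/
noncomputable def asym : Submodule ℂ (Matrix (Fin 5) (Fin 5) ℂ) where
  carrier := {b | b.transpose = -b}
  add_mem' := by
    intro a b ha hb
    simp only [Set.mem_setOf_eq] at *
    rw [Matrix.transpose_add, ha, hb, neg_add]
  zero_mem' := by simp
  smul_mem' := by
    intro c b hb
    simp only [Set.mem_setOf_eq] at *
    rw [Matrix.transpose_smul, hb, smul_neg]

/-- The grading: `𝔰𝔩(5) ⋉ Λ²L` in degree `0`, `L*` in degree `2`, nothing else. -/
noncomputable def grading6 : ℤ → Submodule ℂ W6 := fun i =>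
  if i = 0 then sl5sub.prod (asym.prod ⊥)
  else if i = 2 then (⊥ : Submodule ℂ (Matrix (Fin 5) (Fin 5) ℂ)).prod
    ((⊥ : Submodule ℂ (Matrix (Fin 5) (Fin 5) ℂ)).prod ⊤)
  else ⊥

/-- The binary bracket `μ₂`: the `𝔰𝔩(5)` bracket, the natural actions of `𝔰𝔩(5)` on
`Λ²L` and on `L*`, and `[Λ²L,Λ²L] = [Λ²L,L*] = [L*,L*] = 0`. -/
noncomputable def mu2c (x y : W6) : W6 :=
  (x.1 * y.1 - y.1 * x.1,
   (x.1 * y.2.1 + y.2.1 * x.1.transpose) - (y.1 * x.2.1 + x.2.1 * y.1.transpose),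
   fun k => (-(∑ i, y.2.2 i * x.1 i k)) + (∑ i, x.2.2 i * y.1 i k))

/-- The Levi-Civita symbol `ε^{ijklm}`. -/
noncomputable def eps5 (f : Fin 5 → Fin 5) : ℂ :=
  if h : Function.Bijective f then ((Equiv.Perm.sign (Equiv.ofBijective f h) : ℤ) : ℂ) else 0

/-- The basis element `r̃^i_j = r^i_j − (1/5) δ^i_j r^k_k` of `𝔰𝔩(5)`. -/
noncomputable def rt (i j : Fin 5) : Matrix (Fin 5) (Fin 5) ℂ :=
  Matrix.single i j 1 - (5 : ℂ)⁻¹ • (if i = j then (1 : Matrix (Fin 5) (Fin 5) ℂ) else 0)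

/-- The block `δ_i^{[j}ε^{k]lmab}δ^{[n}_a r̃^{p]}_b` (unnormalized antisymmetrizations,
internal indices `a, b` summed). -/
noncomputable def T6 (i j k l m n p : Fin 5) : Matrix (Fin 5) (Fin 5) ℂ :=
  ∑ a, ∑ b,
    (((if i = j then (1 : ℂ) else 0) * eps5 ![k, l, m, a, b]
      - (if i = k then (1 : ℂ) else 0) * eps5 ![j, l, m, a, b])) •
    ((if n = a then (1 : ℂ) else 0) • rt p b - (if p = a then (1 : ℂ) else 0) • rt n b)

/-- The component `μ₄(e, b₁, b₂, b₃) ∈ 𝔰𝔩(5)` of the quaternary bracket, i.e. the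
`𝔰𝔩(5)`-equivariant projection `L* ⊗ (Λ²L)^{∧3} → 𝔰𝔩(5)` of Theorem 3.1. -/
noncomputable def mu4comp (e : Fin 5 → ℂ) (b1 b2 b3 : Matrix (Fin 5) (Fin 5) ℂ) :
    Matrix (Fin 5) (Fin 5) ℂ :=
  (8 : ℂ)⁻¹ • ∑ i, ∑ j, ∑ k, ∑ l, ∑ m, ∑ n, ∑ p,
    (e i * b1 j k * b2 l m * b3 n p) •
      (-(T6 i j k l m n p) + T6 i j k n p l m - T6 i l m n p j k
        + T6 i l m j k n p - T6 i n p j k l m + T6 i n p l m j k)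

/-- The quaternary bracket `μ₄` on `W6` (graded-skew extension of `mu4comp`). -/
noncomputable def mu4c (x1 x2 x3 x4 : W6) : W6 :=
  (mu4comp x1.2.2 x2.2.1 x3.2.1 x4.2.1 - mu4comp x2.2.2 x1.2.1 x3.2.1 x4.2.1
    + mu4comp x3.2.2 x1.2.1 x2.2.1 x4.2.1 - mu4comp x4.2.2 x1.2.1 x2.2.1 x3.2.1,
   0, 0)

set_option maxRecDepth 10000

/-! ### Numeric evaluation -/
noncomputable def ieps (f : Fin 5 → Fin 5) : ℤ :=
  if h : Function.Bijective f then (Equiv.Perm.sign (Equiv.ofBijective f h) : ℤ) else 0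

lemma eps5_cast (f : Fin 5 → Fin 5) : eps5 f = ((ieps f : ℤ) : ℂ) := by
  unfold eps5 ieps; split <;> simp

lemma rt_04 (q b : Fin 5) : rt q b 0 4 = if q = 0 ∧ b = 4 then 1 else 0 := by
  unfold rt
  by_cases h : q = b <;>
    simp [Matrix.sub_apply, Matrix.smul_apply, Matrix.single, Matrix.one_apply, h,
      and_comm]

noncomputable def iT6 (i j k l m n p : Fin 5) : ℤ :=
  (if p = 0 then 1 else 0) *
    ((if i = j then 1 else 0) * ieps ![k,l,m,n,4] - (if i = k then 1 else 0) * ieps ![j,l,m,n,4])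
  - (if n = 0 then 1 else 0) *
    ((if i = j then 1 else 0) * ieps ![k,l,m,p,4] - (if i = k then 1 else 0) * ieps ![j,l,m,p,4])

lemma T6_04 (i j k l m n p : Fin 5) : T6 i j k l m n p 0 4 = ((iT6 i j k l m n p : ℤ) : ℂ) := by
  unfold T6 iT6
  push_cast [eps5_cast]
  rw [Matrix.sum_apply]
  simp only [Matrix.sum_apply, Matrix.smul_apply, Matrix.sub_apply, rt_04, smul_eq_mul]
  simp only [mul_ite, mul_one, mul_zero, ite_and]
  fin_cases n <;> fin_cases p <;>
    simp [Fin.sum_univ_five]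

noncomputable def iG (i j k l m n p : Fin 5) : ℤ :=
  -(iT6 i j k l m n p) + iT6 i j k n p l m - iT6 i l m n p j k
    + iT6 i l m j k n p - iT6 i n p j k l m + iT6 i n p l m j k

lemma combo_04 (i j k l m n p : Fin 5) :
    (-(T6 i j k l m n p) + T6 i j k n p l m - T6 i l m n p j k
        + T6 i l m j k n p - T6 i n p j k l m + T6 i n p l m j k) 0 4
      = ((iG i j k l m n p : ℤ) : ℂ) := by
  simp only [Matrix.add_apply, Matrix.sub_apply, Matrix.neg_apply, T6_04, iG]
  push_cast
  ring

def evC : Fin 5 → ℂ := fun i => if i = 0 then 1 else 0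
noncomputable def mE (a b : Fin 5) : Matrix (Fin 5) (Fin 5) ℂ :=
  Matrix.single a b 1 - Matrix.single b a 1

lemma sum_delta0 (g : Fin 5 → ℂ) : ∑ i, evC i * g i = g 0 := by
  simp [evC, ite_mul, Finset.sum_ite_eq]

lemma sum_mE (a b : Fin 5) (g : Fin 5 → Fin 5 → ℂ) :
    ∑ j, ∑ k, mE a b j k * g j k = g a b - g b a := by
  simp [mE, Matrix.sub_apply, Matrix.single, sub_mul, ite_mul, ite_and,
    Finset.sum_sub_distrib, Finset.sum_ite_eq]

lemma mu4comp_04 : (mu4comp evC (mE 0 1) (mE 0 2) (mE 0 3)) 0 4 = -6 := by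
  unfold mu4comp
  rw [Matrix.smul_apply]
  simp only [Matrix.sum_apply, Matrix.smul_apply, combo_04, smul_eq_mul]
  have reshape :
      (∑ i, ∑ j, ∑ k, ∑ l, ∑ m, ∑ n, ∑ p : Fin 5,
        (evC i * mE 0 1 j k * mE 0 2 l m * mE 0 3 n p) * ((iG i j k l m n p : ℤ) : ℂ))
      = ∑ i, evC i * (∑ j, ∑ k, mE 0 1 j k * (∑ l, ∑ m, mE 0 2 l m *
          (∑ n, ∑ p, mE 0 3 n p * ((iG i j k l m n p : ℤ) : ℂ)))) := by
    simp only [Finset.mul_sum]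
    exact Finset.sum_congr rfl fun i _ => Finset.sum_congr rfl fun j _ =>
      Finset.sum_congr rfl fun k _ => Finset.sum_congr rfl fun l _ =>
      Finset.sum_congr rfl fun m _ => Finset.sum_congr rfl fun n _ =>
      Finset.sum_congr rfl fun p _ => by ring
  rw [reshape, sum_delta0]
  simp only [sum_mE]
  rw [show ((((iG 0 0 1 0 2 0 3 : ℤ):ℂ) - ((iG 0 0 1 0 2 3 0 : ℤ):ℂ))
      - (((iG 0 0 1 2 0 0 3 : ℤ):ℂ) - ((iG 0 0 1 2 0 3 0 : ℤ):ℂ))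
      - ((((iG 0 1 0 0 2 0 3 : ℤ):ℂ) - ((iG 0 1 0 0 2 3 0 : ℤ):ℂ))
      - (((iG 0 1 0 2 0 0 3 : ℤ):ℂ) - ((iG 0 1 0 2 0 3 0 : ℤ):ℂ))))
    = (((iG 0 0 1 0 2 0 3 - iG 0 0 1 0 2 3 0 - (iG 0 0 1 2 0 0 3 - iG 0 0 1 2 0 3 0)
      - (iG 0 1 0 0 2 0 3 - iG 0 1 0 0 2 3 0 - (iG 0 1 0 2 0 0 3 - iG 0 1 0 2 0 3 0)) : ℤ)) : ℂ)
    from by push_cast; ring]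
  rw [show (iG 0 0 1 0 2 0 3 - iG 0 0 1 0 2 3 0 - (iG 0 0 1 2 0 0 3 - iG 0 0 1 2 0 3 0)
      - (iG 0 1 0 0 2 0 3 - iG 0 1 0 0 2 3 0 - (iG 0 1 0 2 0 0 3 - iG 0 1 0 2 0 3 0)) : ℤ)
      = -48 from by decide]
  norm_num

/-! ### Auxiliary machinery -/

section Aux

/-- Transport a sum over block shuffles to a sum over an indexing type. -/
lemma blockSum {ii j : ℕ} {k : Fin j → ℕ} {M : Type*} [AddCommMonoid M] {ι : Type*} [Fintype ι]
    (F : (((t : Fin j) × Fin (k t)) ≃ Fin ii) → M)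
    (E : ι → (((t : Fin j) × Fin (k t)) ≃ Fin ii))
    (π : (((t : Fin j) × Fin (k t)) ≃ Fin ii) → ι)
    (hBS : ∀ a, IsBlockShuffle (E a))
    (hclass : ∀ e, IsBlockShuffle e → E (π e) = e)
    (hπ : ∀ a, π (E a) = a) :
    (∑ e ∈ Finset.univ.filter
        (fun e : ((t : Fin j) × Fin (k t)) ≃ Fin ii => IsBlockShuffle e), F e)
      = ∑ a, F (E a) := by
  refine Finset.sum_nbij' (fun e => π e) (fun a => E a) ?_ ?_ ?_ ?_ ?_
  · intro a _; exact Finset.mem_univ _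
  · intro a _; exact Finset.mem_filter.2 ⟨Finset.mem_univ _, hBS a⟩
  · intro e he; exact hclass e (Finset.mem_filter.1 he).2
  · intro a _; exact hπ a
  · intro e he; rw [hclass e (Finset.mem_filter.1 he).2]

/-- The two block shuffles for block sizes `(1,1)` at `i = 2`. -/
def f11 (a : Fin 2) : ((t : Fin 2) × Fin (((![0,0] : Fin 2 → Fin 2) t).val + 1)) → Fin 2 :=
  fun q => if q.1.val = 0 then a else (if a.val = 0 then 1 else 0)

lemma f11_bij : ∀ a, Function.Bijective (f11 a) := by decide

noncomputable def E11 (a : Fin 2) :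
    ((t : Fin 2) × Fin (((![0,0] : Fin 2 → Fin 2) t).val + 1)) ≃ Fin 2 :=
  Equiv.ofBijective (f11 a) (f11_bij a)

lemma E11_class : ∀ e, IsBlockShuffle e → E11 (e ⟨0,0⟩) = e := by
  have key : ∀ f : ((t : Fin 2) × Fin (((![0,0] : Fin 2 → Fin 2) t).val + 1)) → Fin 2,
      Function.Bijective f →
      (∀ (t : Fin 2) s s', s < s' → f ⟨t,s⟩ < f ⟨t,s'⟩) → f = f11 (f ⟨0,0⟩) := by decide
  intro e he
  exact (Equiv.coe_fn_injective (key ⇑e e.bijective he)).symm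

lemma E11_pi : ∀ a, E11 a ⟨0,0⟩ = a := by decide

end Aux

lemma coh2E (μg μh φ : (k : ℕ) → MultilinearMap ℂ (fun _ : Fin k => W6) W6)
    (hg1 : μg 1 = 0) (hh1 : μh 1 = 0)
    (u v : W6)
    (h : MorphCoherence (fun k w => μg k w) (fun k w => μh k w) (fun n w => φ n w)
      2 ![0,0] ![u, v]) :
    (2⁻¹ : ℂ) • μh 2 ![φ 1 (fun _ => u), φ 1 (fun _ => v)]
      - (2⁻¹ : ℂ) • μh 2 ![φ 1 (fun _ => v), φ 1 (fun _ => u)]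
      = φ 1 (fun _ => μg 2 ![u, v]) := by
  unfold MorphCoherence at h
  rw [show (Finset.Icc 1 2 : Finset ℕ) = {1, 2} from by decide] at h
  rw [Finset.sum_insert (by decide), Finset.sum_singleton] at h
  simp only [hh1, hg1, MultilinearMap.zero_apply, smul_zero, Finset.sum_const_zero,
    zero_add, add_zero] at h
  rw [show Finset.univ.filter (fun c : Fin 2 → Fin 2 => ∑ t, ((c t).val + 1) = 2)
      = {![0,0]} from by decide, Finset.sum_singleton] at h
  rw [blockSum _ E11 (fun e => e ⟨0,0⟩) (by decide) E11_class E11_pi] at h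
  rw [Fin.sum_univ_two, Fin.sum_univ_two] at h
  simp only [Fin.val_zero, Fin.val_one] at h
  rw [show chiSign ![0,0] (E11 0) = 1 from by decide,
      show chiSign ![0,0] (E11 1) = -1 from by decide,
      show zetaExtra (fun t => (((![0,0] : Fin 2 → Fin 2)) t).val + 1) ![0,0] (E11 0) = 1
        from by decide,
      show zetaExtra (fun t => (((![0,0] : Fin 2 → Fin 2)) t).val + 1) ![0,0] (E11 1) = 1
        from by decide] at h
  rw [show Finset.univ.filter (IsShuffle (n := 2) 2) = {1} from by decide,
      Finset.sum_singleton, show koszulSign ![0,0] (1 : Equiv.Perm (Fin 2)) = 1 from by decide]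
      at h
  simp only [show (2:ℕ)-(0+1)+1 = 2 from rfl, show (2:ℕ)-(1+1)+1 = 1 from rfl,
    show (0:ℕ)+1 = 1 from rfl, show (1:ℕ)+1 = 2 from rfl, hg1, MultilinearMap.zero_apply] at h
  have hcons : ∀ g : Fin (2-(0+1)) → W6, φ (2-(0+1)+1) (Fin.cons 0 g) = 0 :=
    fun g => (φ (2-(0+1)+1)).map_coord_zero 0 (by simp)
  simp only [hcons, smul_zero, Finset.sum_const_zero, neg_zero, zero_add] at h
  have hargA : (fun t : Fin 2 => φ (((![0,0] : Fin 2 → Fin 2) t).val + 1)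
      (fun s => ![u, v] (E11 0 ⟨t, s⟩))) = ![φ 1 (fun _ => u), φ 1 (fun _ => v)] := by
    funext t
    fin_cases t
    · show φ 1 (fun s => ![u, v] (E11 0 ⟨0, s⟩)) = _
      exact congrArg _ (funext fun s => by rw [show E11 0 ⟨0, s⟩ = 0 from by revert s; decide]; rfl)
    · show φ 1 (fun s => ![u, v] (E11 0 ⟨1, s⟩)) = _
      exact congrArg _ (funext fun s => by rw [show E11 0 ⟨1, s⟩ = 1 from by revert s; decide]; rfl)
  have hargB : (fun t : Fin 2 => φ (((![0,0] : Fin 2 → Fin 2) t).val + 1)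
      (fun s => ![u, v] (E11 1 ⟨t, s⟩))) = ![φ 1 (fun _ => v), φ 1 (fun _ => u)] := by
    funext t
    fin_cases t
    · show φ 1 (fun s => ![u, v] (E11 1 ⟨0, s⟩)) = _
      exact congrArg _ (funext fun s => by rw [show E11 1 ⟨0, s⟩ = 1 from by revert s; decide]; rfl)
    · show φ 1 (fun s => ![u, v] (E11 1 ⟨1, s⟩)) = _
      exact congrArg _ (funext fun s => by rw [show E11 1 ⟨1, s⟩ = 0 from by revert s; decide]; rfl)
  rw [hargA, hargB] at h
  have hc1 : ∀ (A : W6) (g : Fin (2-(1+1)) → W6), φ (2-(1+1)+1) (Fin.cons A g)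
      = φ 1 (fun _ => A) := fun A g =>
    congrArg _ (funext fun t => by
      rw [show t = 0 from Fin.ext (by have := t.isLt; omega)]
      rfl)
  rw [hc1] at h
  have hvec : (fun t : Fin (1+1) => ![u, v] ((1 : Equiv.Perm (Fin 2))
      (Fin.castLE (by omega) t))) = ![u, v] :=
    funext fun t => congrArg _ (Fin.ext rfl)
  rw [hvec] at h
  refine Eq.trans ?_ (Eq.trans h ?_)
  · norm_num [Nat.factorial]
    module
  · norm_num

section Aux4

/-- Block shuffles for block sizes `(1,3)` at `i = 4`. -/
def f13 (a : Fin 4) : ((t : Fin 2) × Fin (((![0,2] : Fin 2 → Fin 4) t).val + 1)) → Fin 4 :=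
  fun q => if q.1.val = 0 then a
  else (List.filter (fun v => v ≠ a) [0,1,2,3]).getD q.2.val 0

lemma f13_bij : ∀ a, Function.Bijective (f13 a) := by decide

noncomputable def E13 (a : Fin 4) :
    ((t : Fin 2) × Fin (((![0,2] : Fin 2 → Fin 4) t).val + 1)) ≃ Fin 4 :=
  Equiv.ofBijective (f13 a) (f13_bij a)

lemma E13_class : ∀ e, IsBlockShuffle e → E13 (e ⟨0,0⟩) = e := by
  have key : ∀ f : ((t : Fin 2) × Fin (((![0,2] : Fin 2 → Fin 4) t).val + 1)) → Fin 4,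
      Function.Bijective f →
      (∀ (t : Fin 2) s s', s < s' → f ⟨t,s⟩ < f ⟨t,s'⟩) → f = f13 (f ⟨0,0⟩) := by decide
  intro e he
  exact (Equiv.coe_fn_injective (key ⇑e e.bijective he)).symm

lemma E13_pi : ∀ a, E13 a ⟨0,0⟩ = a := by decide

/-- Block shuffles for block sizes `(3,1)` at `i = 4`. -/
def f31 (a : Fin 4) : ((t : Fin 2) × Fin (((![2,0] : Fin 2 → Fin 4) t).val + 1)) → Fin 4 :=
  fun q => if q.1.val = 1 then a
  else (List.filter (fun v => v ≠ a) [0,1,2,3]).getD q.2.val 0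

lemma f31_bij : ∀ a, Function.Bijective (f31 a) := by decide

noncomputable def E31 (a : Fin 4) :
    ((t : Fin 2) × Fin (((![2,0] : Fin 2 → Fin 4) t).val + 1)) ≃ Fin 4 :=
  Equiv.ofBijective (f31 a) (f31_bij a)

lemma E31_class : ∀ e, IsBlockShuffle e → E31 (e ⟨1,0⟩) = e := by
  have key : ∀ f : ((t : Fin 2) × Fin (((![2,0] : Fin 2 → Fin 4) t).val + 1)) → Fin 4,
      Function.Bijective f →
      (∀ (t : Fin 2) s s', s < s' → f ⟨t,s⟩ < f ⟨t,s'⟩) → f = f31 (f ⟨1,0⟩) := by decide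
  intro e he
  exact (Equiv.coe_fn_injective (key ⇑e e.bijective he)).symm

lemma E31_pi : ∀ a, E31 a ⟨1,0⟩ = a := by decide

end Aux4

lemma coh4E (μg μh φ : (k : ℕ) → MultilinearMap ℂ (fun _ : Fin k => W6) W6)
    (hg1 : μg 1 = 0) (hg3 : μg 3 = 0) (hh1 : μh 1 = 0) (hh3 : μh 3 = 0) (hh4 : μh 4 = 0)
    (x0 x1 x2 x3 : W6)
    (hg20 : ∀ a b : Fin 4, μg 2 ![ (![x0,x1,x2,x3]) a, (![x0,x1,x2,x3]) b ] = 0)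
    (hφ2 : ∀ v : Fin 2 → Fin 4, φ 2 (fun s => (![x0,x1,x2,x3]) (v s)) = 0)
    (hφ3b : φ 3 ![x1,x2,x3] = 0)
    (h : MorphCoherence (fun k w => μg k w) (fun k w => μh k w) (fun n w => φ n w)
      4 ![2,0,0,0] ![x0,x1,x2,x3]) :
    (2⁻¹ : ℂ) • ( - μh 2 ![φ 1 (fun _ => x1), φ 3 ![x0,x2,x3]]
        + μh 2 ![φ 1 (fun _ => x2), φ 3 ![x0,x1,x3]]
        - μh 2 ![φ 1 (fun _ => x3), φ 3 ![x0,x1,x2]]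
        + μh 2 ![φ 3 ![x0,x2,x3], φ 1 (fun _ => x1)]
        - μh 2 ![φ 3 ![x0,x1,x3], φ 1 (fun _ => x2)]
        + μh 2 ![φ 3 ![x0,x1,x2], φ 1 (fun _ => x3)] )
      = φ 1 (fun _ => μg 4 ![x0,x1,x2,x3]) := by
  unfold MorphCoherence at h
  rw [show (Finset.Icc 1 4 : Finset ℕ) = {1, 2, 3, 4} from by decide] at h
  rw [Finset.sum_insert (by decide), Finset.sum_insert (by decide),
    Finset.sum_insert (by decide), Finset.sum_singleton] at h
  simp only [hh1, hh3, hh4, MultilinearMap.zero_apply, smul_zero, Finset.sum_const_zero,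
    zero_add, add_zero] at h
  rw [show Finset.univ.filter (fun c : Fin 2 → Fin 4 => ∑ t, ((c t).val + 1) = 4)
      = {![0,2], ![1,1], ![2,0]} from by decide] at h
  rw [Finset.sum_insert (by decide), Finset.sum_insert (by decide), Finset.sum_singleton] at h
  have k11 : ∀ e : ((t : Fin 2) × Fin (((![1,1] : Fin 2 → Fin 4) t).val + 1)) ≃ Fin 4,
      μh 2 (fun t => φ (((![1,1] : Fin 2 → Fin 4) t).val + 1)
        (fun s => (![x0,x1,x2,x3]) (e ⟨t, s⟩))) = 0 := fun e =>
    (μh 2).map_coord_zero 0 (hφ2 (fun s => e ⟨0, s⟩))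
  simp only [k11, smul_zero, Finset.sum_const_zero, zero_add, add_zero] at h
  rw [blockSum _ E13 (fun e => e ⟨0,0⟩) (by decide) E13_class E13_pi] at h
  rw [blockSum _ E31 (fun e => e ⟨1,0⟩) (by decide) E31_class E31_pi] at h
  rw [Fin.sum_univ_four, Fin.sum_univ_four, Fin.sum_univ_four] at h
  -- scalar values
  rw [show chiSign ![2,0,0,0] (E13 0) * zetaExtra (fun t => ((![0,2] : Fin 2 → Fin 4) t).val + 1)
        ![2,0,0,0] (E13 0) = 1 from by decide,
      show chiSign ![2,0,0,0] (E13 1) * zetaExtra (fun t => ((![0,2] : Fin 2 → Fin 4) t).val + 1)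
        ![2,0,0,0] (E13 1) = -1 from by decide,
      show chiSign ![2,0,0,0] (E13 2) * zetaExtra (fun t => ((![0,2] : Fin 2 → Fin 4) t).val + 1)
        ![2,0,0,0] (E13 2) = 1 from by decide,
      show chiSign ![2,0,0,0] (E13 3) * zetaExtra (fun t => ((![0,2] : Fin 2 → Fin 4) t).val + 1)
        ![2,0,0,0] (E13 3) = -1 from by decide,
      show chiSign ![2,0,0,0] (E31 0) * zetaExtra (fun t => ((![2,0] : Fin 2 → Fin 4) t).val + 1)
        ![2,0,0,0] (E31 0) = -1 from by decide,
      show chiSign ![2,0,0,0] (E31 1) * zetaExtra (fun t => ((![2,0] : Fin 2 → Fin 4) t).val + 1)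
        ![2,0,0,0] (E31 1) = 1 from by decide,
      show chiSign ![2,0,0,0] (E31 2) * zetaExtra (fun t => ((![2,0] : Fin 2 → Fin 4) t).val + 1)
        ![2,0,0,0] (E31 2) = -1 from by decide,
      show chiSign ![2,0,0,0] (E31 3) * zetaExtra (fun t => ((![2,0] : Fin 2 → Fin 4) t).val + 1)
        ![2,0,0,0] (E31 3) = 1 from by decide] at h
  -- argument vectors, (1,3) blocks
  have hA0 : (fun t : Fin 2 => φ (((![0,2] : Fin 2 → Fin 4) t).val + 1)
      (fun s => (![x0,x1,x2,x3]) (E13 0 ⟨t, s⟩))) = ![φ 1 (fun _ => x0), φ 3 ![x1,x2,x3]] := by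
    funext t; fin_cases t
    · show φ 1 (fun s => (![x0,x1,x2,x3]) (E13 0 ⟨0, s⟩)) = _
      exact congrArg _ (funext fun s => by
        rw [show E13 0 ⟨0, s⟩ = 0 from by revert s; decide]; rfl)
    · show φ 3 (fun s => (![x0,x1,x2,x3]) (E13 0 ⟨1, s⟩)) = _
      exact congrArg _ (funext fun s => by fin_cases s <;> rfl)
  have hA1 : (fun t : Fin 2 => φ (((![0,2] : Fin 2 → Fin 4) t).val + 1)
      (fun s => (![x0,x1,x2,x3]) (E13 1 ⟨t, s⟩))) = ![φ 1 (fun _ => x1), φ 3 ![x0,x2,x3]] := by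
    funext t; fin_cases t
    · show φ 1 (fun s => (![x0,x1,x2,x3]) (E13 1 ⟨0, s⟩)) = _
      exact congrArg _ (funext fun s => by
        rw [show E13 1 ⟨0, s⟩ = 1 from by revert s; decide]; rfl)
    · show φ 3 (fun s => (![x0,x1,x2,x3]) (E13 1 ⟨1, s⟩)) = _
      exact congrArg _ (funext fun s => by fin_cases s <;> rfl)
  have hA2 : (fun t : Fin 2 => φ (((![0,2] : Fin 2 → Fin 4) t).val + 1)
      (fun s => (![x0,x1,x2,x3]) (E13 2 ⟨t, s⟩))) = ![φ 1 (fun _ => x2), φ 3 ![x0,x1,x3]] := by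
    funext t; fin_cases t
    · show φ 1 (fun s => (![x0,x1,x2,x3]) (E13 2 ⟨0, s⟩)) = _
      exact congrArg _ (funext fun s => by
        rw [show E13 2 ⟨0, s⟩ = 2 from by revert s; decide]; rfl)
    · show φ 3 (fun s => (![x0,x1,x2,x3]) (E13 2 ⟨1, s⟩)) = _
      exact congrArg _ (funext fun s => by fin_cases s <;> rfl)
  have hA3 : (fun t : Fin 2 => φ (((![0,2] : Fin 2 → Fin 4) t).val + 1)
      (fun s => (![x0,x1,x2,x3]) (E13 3 ⟨t, s⟩))) = ![φ 1 (fun _ => x3), φ 3 ![x0,x1,x2]] := by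
    funext t; fin_cases t
    · show φ 1 (fun s => (![x0,x1,x2,x3]) (E13 3 ⟨0, s⟩)) = _
      exact congrArg _ (funext fun s => by
        rw [show E13 3 ⟨0, s⟩ = 3 from by revert s; decide]; rfl)
    · show φ 3 (fun s => (![x0,x1,x2,x3]) (E13 3 ⟨1, s⟩)) = _
      exact congrArg _ (funext fun s => by fin_cases s <;> rfl)
  -- argument vectors, (3,1) blocks
  have hB0 : (fun t : Fin 2 => φ (((![2,0] : Fin 2 → Fin 4) t).val + 1)
      (fun s => (![x0,x1,x2,x3]) (E31 0 ⟨t, s⟩))) = ![φ 3 ![x1,x2,x3], φ 1 (fun _ => x0)] := by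
    funext t; fin_cases t
    · show φ 3 (fun s => (![x0,x1,x2,x3]) (E31 0 ⟨0, s⟩)) = _
      exact congrArg _ (funext fun s => by fin_cases s <;> rfl)
    · show φ 1 (fun s => (![x0,x1,x2,x3]) (E31 0 ⟨1, s⟩)) = _
      exact congrArg _ (funext fun s => by
        rw [show E31 0 ⟨1, s⟩ = 0 from by revert s; decide]; rfl)
  have hB1 : (fun t : Fin 2 => φ (((![2,0] : Fin 2 → Fin 4) t).val + 1)
      (fun s => (![x0,x1,x2,x3]) (E31 1 ⟨t, s⟩))) = ![φ 3 ![x0,x2,x3], φ 1 (fun _ => x1)] := by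
    funext t; fin_cases t
    · show φ 3 (fun s => (![x0,x1,x2,x3]) (E31 1 ⟨0, s⟩)) = _
      exact congrArg _ (funext fun s => by fin_cases s <;> rfl)
    · show φ 1 (fun s => (![x0,x1,x2,x3]) (E31 1 ⟨1, s⟩)) = _
      exact congrArg _ (funext fun s => by
        rw [show E31 1 ⟨1, s⟩ = 1 from by revert s; decide]; rfl)
  have hB2 : (fun t : Fin 2 => φ (((![2,0] : Fin 2 → Fin 4) t).val + 1)
      (fun s => (![x0,x1,x2,x3]) (E31 2 ⟨t, s⟩))) = ![φ 3 ![x0,x1,x3], φ 1 (fun _ => x2)] := by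
    funext t; fin_cases t
    · show φ 3 (fun s => (![x0,x1,x2,x3]) (E31 2 ⟨0, s⟩)) = _
      exact congrArg _ (funext fun s => by fin_cases s <;> rfl)
    · show φ 1 (fun s => (![x0,x1,x2,x3]) (E31 2 ⟨1, s⟩)) = _
      exact congrArg _ (funext fun s => by
        rw [show E31 2 ⟨1, s⟩ = 2 from by revert s; decide]; rfl)
  have hB3 : (fun t : Fin 2 => φ (((![2,0] : Fin 2 → Fin 4) t).val + 1)
      (fun s => (![x0,x1,x2,x3]) (E31 3 ⟨t, s⟩))) = ![φ 3 ![x0,x1,x2], φ 1 (fun _ => x3)] := by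
    funext t; fin_cases t
    · show φ 3 (fun s => (![x0,x1,x2,x3]) (E31 3 ⟨0, s⟩)) = _
      exact congrArg _ (funext fun s => by fin_cases s <;> rfl)
    · show φ 1 (fun s => (![x0,x1,x2,x3]) (E31 3 ⟨1, s⟩)) = _
      exact congrArg _ (funext fun s => by
        rw [show E31 3 ⟨1, s⟩ = 3 from by revert s; decide]; rfl)
  rw [hA0, hA1, hA2, hA3, hB0, hB1, hB2, hB3] at h
  -- the a = 0 terms vanish since φ³(Λ²L,Λ²L,Λ²L) = 0
  rw [hφ3b] at h
  rw [show μh 2 ![φ 1 (fun _ => x0), (0:W6)] = 0 from (μh 2).map_coord_zero 1 (by simp),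
      show μh 2 ![(0:W6), φ 1 (fun _ => x0)] = 0 from (μh 2).map_coord_zero 0 (by simp)] at h
  -- right-hand side: kill the μg₁ and μg₃ terms
  have kg1 : μg ((0 : Fin 4).val + 1) = 0 := hg1
  have kg3 : μg ((2 : Fin 4).val + 1) = 0 := hg3
  simp only [kg1, kg3, MultilinearMap.zero_apply] at h
  have hcons0 : ∀ g : Fin (4 - ((0 : Fin 4).val + 1)) → W6,
      φ (4 - ((0 : Fin 4).val + 1) + 1) (Fin.cons 0 g) = 0 :=
    fun g => (φ _).map_coord_zero 0 (by simp)
  have hcons2 : ∀ g : Fin (4 - ((2 : Fin 4).val + 1)) → W6,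
      φ (4 - ((2 : Fin 4).val + 1) + 1) (Fin.cons 0 g) = 0 :=
    fun g => (φ _).map_coord_zero 0 (by simp)
  simp only [hcons0, hcons2, smul_zero, Finset.sum_const_zero, zero_add, add_zero] at h
  -- kill the μg₂ terms
  have kg2 : ∀ σ : Equiv.Perm (Fin 4), μg ((1 : Fin 4).val + 1)
      (fun t => (![x0,x1,x2,x3]) (σ (Fin.castLE (by norm_num) t))) = 0 := by
    intro σ
    have hv : (fun t : Fin ((1 : Fin 4).val + 1) =>
        (![x0,x1,x2,x3]) (σ (Fin.castLE (by norm_num) t)))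
        = ![ (![x0,x1,x2,x3]) (σ 0), (![x0,x1,x2,x3]) (σ 1)] := by
      funext t; fin_cases t <;> rfl
    rw [hv]
    exact hg20 (σ 0) (σ 1)
  simp only [kg2] at h
  have hcons1 : ∀ g : Fin (4 - ((1 : Fin 4).val + 1)) → W6,
      φ (4 - ((1 : Fin 4).val + 1) + 1) (Fin.cons 0 g) = 0 :=
    fun g => (φ _).map_coord_zero 0 (by simp)
  simp only [hcons1, smul_zero, Finset.sum_const_zero, zero_add, add_zero] at h
  -- the top shuffle term
  rw [show Finset.univ.filter (IsShuffle (n := 4) ((3 : Fin 4).val + 1)) = {1} from by decide,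
      Finset.sum_singleton,
      show koszulSign ![2,0,0,0] (1 : Equiv.Perm (Fin 4)) = 1 from by decide] at h
  have hc1 : ∀ (A : W6) (g : Fin (4 - ((3 : Fin 4).val + 1)) → W6),
      φ (4 - ((3 : Fin 4).val + 1) + 1) (Fin.cons A g) = φ 1 (fun _ => A) := fun A g =>
    congrArg _ (funext fun t => by
      rw [show t = 0 from Fin.ext (by have := t.isLt; omega)]
      rfl)
  rw [hc1] at h
  have hv4 : (fun t : Fin ((3 : Fin 4).val + 1) =>
      (![x0,x1,x2,x3]) ((1 : Equiv.Perm (Fin 4)) (Fin.castLE (by decide) t)))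
      = ![x0,x1,x2,x3] := funext fun t => rfl
  rw [hv4] at h
  refine Eq.trans ?_ (Eq.trans h ?_)
  · norm_num [Nat.factorial]
    module
  · show ((((-1 : ℤ)) ^ (0:ℕ) * 1 : ℤ) : ℂ) • φ 1 (fun _ => μg 4 ![x0,x1,x2,x3])
      = φ 1 (fun _ => μg 4 ![x0,x1,x2,x3])
    norm_num

lemma godd (z : ℤ) (h0 : z ≠ 0) (h2 : z ≠ 2) : grading6 z = ⊥ := by
  unfold grading6
  rw [if_neg h0, if_neg h2]

lemma std_t (a b : Fin 5) : (Matrix.single a b (1:ℂ)).transpose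
    = Matrix.single b a 1 := by
  ext i j
  simp [Matrix.single, Matrix.transpose_apply, and_comm]

lemma mE_asym (a b : Fin 5) : mE a b ∈ asym := by
  show (mE a b).transpose = -(mE a b)
  rw [mE, Matrix.transpose_sub, std_t, std_t, neg_sub]

lemma mem_g0 (r : Matrix (Fin 5) (Fin 5) ℂ) (hr : r ∈ asym) :
    ((0, r, 0) : W6) ∈ grading6 0 := by
  unfold grading6
  rw [if_pos rfl]
  exact ⟨Submodule.zero_mem _, hr, Submodule.zero_mem _⟩

lemma mem_g2 (ev : Fin 5 → ℂ) : ((0, 0, ev) : W6) ∈ grading6 2 := by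
  unfold grading6
  norm_num

lemma mu2c_zero (x y : W6) (hx : x.1 = 0) (hy : y.1 = 0) : mu2c x y = 0 := by
  unfold mu2c
  rw [hx, hy]
  refine Prod.ext (by simp) (Prod.ext (by simp) ?_)
  show (fun k => _) = (0 : Fin 5 → ℂ)
  funext k
  simp

lemma mu4comp_e0 (b1 b2 b3 : Matrix (Fin 5) (Fin 5) ℂ) : mu4comp 0 b1 b2 b3 = 0 := by
  unfold mu4comp
  simp

/-- Let `𝔤` be the `L∞`-algebra on `𝔰𝔩(5,ℂ) ⊕ Λ²ℂ⁵ ⊕ (ℂ⁵)*[−2]` with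
the brackets of the extended holomorphic symmetry algebra (the nontrivial `μ₂` and the
nonzero equivariant `μ₄ : L* ⊗ (Λ²L)^{∧3} → 𝔰𝔩(5)`), and let `𝔥` be any strict graded
Lie algebra structure on the same graded vector space.  Then there is no
`L∞`-isomorphism `φ : 𝔤 ⇝ 𝔥`. -/
theorem no_strict_minimal_model
    (μg : (k : ℕ) → MultilinearMap ℂ (fun _ : Fin k => W6) W6)
    (hμ2 : ∀ x y : W6, μg 2 ![x, y] = mu2c x y)
    (hμ4 : ∀ x1 x2 x3 x4 : W6, μg 4 ![x1, x2, x3, x4] = mu4c x1 x2 x3 x4)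
    (hgother : ∀ k, k ≠ 2 → k ≠ 4 → μg k = 0)
    (μh : (k : ℕ) → MultilinearMap ℂ (fun _ : Fin k => W6) W6)
    (hstrict : ∀ k, k ≠ 2 → μh k = 0)
    (hdegh : ∀ (k : ℕ) (d : Fin k → ℤ) (x : Fin k → W6), (∀ i, x i ∈ grading6 (d i)) →
      μh k x ∈ grading6 ((∑ i, d i) + (2 - (k : ℤ))))
    (hjach : ∀ (n : ℕ) (d : Fin n → ℤ) (x : Fin n → W6), (∀ i, x i ∈ grading6 (d i)) →
      HomotopyJacobi (fun k v => μh k v) n d x) :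
    ¬ ∃ φ : (n : ℕ) → MultilinearMap ℂ (fun _ : Fin n => W6) W6,
        (∀ (n : ℕ) (d : Fin n → ℤ) (x : Fin n → W6), (∀ i, x i ∈ grading6 (d i)) →
          φ n x ∈ grading6 ((∑ i, d i) + (1 - (n : ℤ)))) ∧
        (∀ (i : ℕ), 1 ≤ i → ∀ (d : Fin i → ℤ) (x : Fin i → W6),
          (∀ t, x t ∈ grading6 (d t)) →
          MorphCoherence (fun k v => μg k v) (fun k v => μh k v) (fun n v => φ n v) i d x) ∧
        Function.Bijective (fun w : W6 => φ 1 (fun _ => w)) := by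
  rintro ⟨φ, hφdeg, hφcoh, hφbij⟩
  -- the four elements
  set xe : W6 := (0, 0, evC) with hxe_def
  set x1 : W6 := (0, mE 0 1, 0) with hx1_def
  set x2 : W6 := (0, mE 0 2, 0) with hx2_def
  set x3 : W6 := (0, mE 0 3, 0) with hx3_def
  have hXmem : ∀ a : Fin 4, (![xe,x1,x2,x3]) a ∈ grading6 ((![2,0,0,0] : Fin 4 → ℤ) a) := by
    intro a
    fin_cases a
    · exact mem_g2 evC
    · exact mem_g0 _ (mE_asym 0 1)
    · exact mem_g0 _ (mE_asym 0 2)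
    · exact mem_g0 _ (mE_asym 0 3)
  have hdval : ∀ a : Fin 4, (![2,0,0,0] : Fin 4 → ℤ) a = 0 ∨ (![2,0,0,0] : Fin 4 → ℤ) a = 2 :=
    by decide
  -- φ's linear first component
  have hupd : ∀ (w : W6), (fun _ : Fin 1 => w) = Function.update (fun _ : Fin 1 => (0:W6)) 0 w := by
    intro w
    funext i
    rw [show i = 0 from Subsingleton.elim i 0]
    simp
  set F : W6 →ₗ[ℂ] W6 :=
    { toFun := fun w => φ 1 (fun _ => w)
      map_add' := by
        intro a b
        show φ 1 (fun _ => a + b) = φ 1 (fun _ => a) + φ 1 (fun _ => b)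
        rw [hupd (a+b), hupd a, hupd b]
        exact (φ 1).map_update_add _ 0 a b
      map_smul' := by
        intro c a
        show φ 1 (fun _ => c • a) = (RingHom.id ℂ) c • φ 1 (fun _ => a)
        rw [hupd (c • a), hupd a, RingHom.id_apply]
        exact (φ 1).map_update_smul _ 0 c a } with hF_def
  have hF0 : ∀ w ∈ grading6 0, F w ∈ grading6 0 := by
    intro w hw
    have h := hφdeg 1 (fun _ => 0) (fun _ => w) (fun _ => hw)
    rwa [show ((∑ _i : Fin 1, (0:ℤ)) + (1 - ((1:ℕ):ℤ))) = 0 by simp] at h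
  have hLsurj : Function.Surjective (F.restrict hF0) := by
    rw [← LinearMap.injective_iff_surjective]
    intro a b hab
    exact Subtype.ext (hφbij.1 (congrArg Subtype.val hab))
  -- vanishing of φ² on our homogeneous elements
  have hφ2 : ∀ v : Fin 2 → Fin 4, φ 2 (fun s => (![xe,x1,x2,x3]) (v s)) = 0 := by
    intro v
    have h := hφdeg 2 (fun s => (![2,0,0,0] : Fin 4 → ℤ) (v s))
      (fun s => (![xe,x1,x2,x3]) (v s)) (fun s => hXmem (v s))
    rw [godd _ ?_ ?_] at h
    · exact (Submodule.mem_bot ℂ).1 h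
    · rcases hdval (v 0) with h0 | h0 <;> rcases hdval (v 1) with h1 | h1 <;>
        simp [Fin.sum_univ_two, h0, h1]
    · rcases hdval (v 0) with h0 | h0 <;> rcases hdval (v 1) with h1 | h1 <;>
        simp [Fin.sum_univ_two, h0, h1]
  -- vanishing of φ³ on three Λ²L's
  have hφ3b : φ 3 ![x1, x2, x3] = 0 := by
    have h := hφdeg 3 ![0,0,0] ![x1,x2,x3] ?_
    · rw [godd _ (by simp [Fin.sum_univ_three]) (by simp [Fin.sum_univ_three])] at h
      exact (Submodule.mem_bot ℂ).1 h
    · intro t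
      fin_cases t
      · exact mem_g0 _ (mE_asym 0 1)
      · exact mem_g0 _ (mE_asym 0 2)
      · exact mem_g0 _ (mE_asym 0 3)
  -- μg₂ vanishes on pairs of our elements
  have hX1 : ∀ a : Fin 4, ((![xe,x1,x2,x3]) a).1 = 0 := by
    intro a; fin_cases a <;> rfl
  have hg20 : ∀ a b : Fin 4, μg 2 ![ (![xe,x1,x2,x3]) a, (![xe,x1,x2,x3]) b ] = 0 := by
    intro a b
    rw [hμ2]
    exact mu2c_zero _ _ (hX1 a) (hX1 b)
  -- the three degree-0 images Yₐ and their φ₁-preimages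
  have hYmem : ∀ (u v : W6), u ∈ grading6 0 → v ∈ grading6 0 →
      φ 3 ![xe, u, v] ∈ grading6 0 := by
    intro u v hu hv
    have h := hφdeg 3 ![2,0,0] ![xe,u,v] ?_
    · rwa [show ((∑ i, (![2,0,0] : Fin 3 → ℤ) i) + (1 - ((3:ℕ):ℤ))) = 0
        by simp [Fin.sum_univ_three]] at h
    · intro t
      fin_cases t
      · exact mem_g2 evC
      · exact hu
      · exact hv
  obtain ⟨z1s, hz1⟩ := hLsurj ⟨φ 3 ![xe, x2, x3],
    hYmem _ _ (mem_g0 _ (mE_asym 0 2)) (mem_g0 _ (mE_asym 0 3))⟩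
  obtain ⟨z2s, hz2⟩ := hLsurj ⟨φ 3 ![xe, x1, x3],
    hYmem _ _ (mem_g0 _ (mE_asym 0 1)) (mem_g0 _ (mE_asym 0 3))⟩
  obtain ⟨z3s, hz3⟩ := hLsurj ⟨φ 3 ![xe, x1, x2],
    hYmem _ _ (mem_g0 _ (mE_asym 0 1)) (mem_g0 _ (mE_asym 0 2))⟩
  have hz1v : φ 1 (fun _ => (z1s : W6)) = φ 3 ![xe, x2, x3] := congrArg Subtype.val hz1
  have hz2v : φ 1 (fun _ => (z2s : W6)) = φ 3 ![xe, x1, x3] := congrArg Subtype.val hz2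
  have hz3v : φ 1 (fun _ => (z3s : W6)) = φ 3 ![xe, x1, x2] := congrArg Subtype.val hz3
  -- the binary coherences
  have hmem2 : ∀ (a : W6), a ∈ grading6 0 → ∀ (b : W6), b ∈ grading6 0 →
      ∀ t : Fin 2, (![a, b]) t ∈ grading6 ((![0,0] : Fin 2 → ℤ) t) := by
    intro a ha b hb t
    fin_cases t
    · exact ha
    · exact hb
  have B1 := coh2E μg μh φ (hgother 1 (by norm_num) (by norm_num)) (hstrict 1 (by norm_num))
    x1 z1s (hφcoh 2 (by norm_num) ![0,0] ![x1, (z1s : W6)]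
      (hmem2 _ (mem_g0 _ (mE_asym 0 1)) _ z1s.2))
  have B2 := coh2E μg μh φ (hgother 1 (by norm_num) (by norm_num)) (hstrict 1 (by norm_num))
    x2 z2s (hφcoh 2 (by norm_num) ![0,0] ![x2, (z2s : W6)]
      (hmem2 _ (mem_g0 _ (mE_asym 0 2)) _ z2s.2))
  have B3 := coh2E μg μh φ (hgother 1 (by norm_num) (by norm_num)) (hstrict 1 (by norm_num))
    x3 z3s (hφcoh 2 (by norm_num) ![0,0] ![x3, (z3s : W6)]
      (hmem2 _ (mem_g0 _ (mE_asym 0 3)) _ z3s.2))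
  rw [hz1v] at B1
  rw [hz2v] at B2
  rw [hz3v] at B3
  -- the quaternary coherence
  have H4 := coh4E μg μh φ (hgother 1 (by norm_num) (by norm_num))
    (hgother 3 (by norm_num) (by norm_num)) (hstrict 1 (by norm_num))
    (hstrict 3 (by norm_num)) (hstrict 4 (by norm_num))
    xe x1 x2 x3 hg20 hφ2 hφ3b
    (hφcoh 4 (by norm_num) ![2,0,0,0] ![xe,x1,x2,x3] hXmem)
  -- combine
  have key : φ 1 (fun _ => μg 4 ![xe,x1,x2,x3])
      = - φ 1 (fun _ => μg 2 ![x1, (z1s : W6)]) + φ 1 (fun _ => μg 2 ![x2, (z2s : W6)])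
        - φ 1 (fun _ => μg 2 ![x3, (z3s : W6)]) := by
    rw [← H4, ← B1, ← B2, ← B3]
    module
  have keyF : F (μg 4 ![xe,x1,x2,x3])
      = F (- μg 2 ![x1, (z1s : W6)] + μg 2 ![x2, (z2s : W6)] - μg 2 ![x3, (z3s : W6)]) := by
    rw [map_sub, map_add, map_neg]
    exact key
  have keyW : μg 4 ![xe,x1,x2,x3]
      = - μg 2 ![x1, (z1s : W6)] + μg 2 ![x2, (z2s : W6)] - μg 2 ![x3, (z3s : W6)] :=
    hφbij.1 keyF
  rw [hμ4, hμ2, hμ2, hμ2] at keyW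
  have hfst := congrArg Prod.fst keyW
  simp only [mu4c, mu2c, hxe_def, hx1_def, hx2_def, hx3_def, Prod.fst_add, Prod.fst_sub,
    Prod.fst_neg, mu4comp_e0, Matrix.zero_mul, Matrix.mul_zero, sub_zero, add_zero, zero_sub,
    neg_zero, zero_add, neg_neg] at hfst
  have h04 := congrFun (congrFun hfst 0) 4
  rw [mu4comp_04] at h04
  norm_num at h04
end
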